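/- Let G be a follower-separated, synchronizing, deterministic presentation over a finite alphabet Σ. Then ⟨G⟩ is a shift of finite type if and only if the graph Ĝ is acyclic (has no nonempty path starting and ending at the same vertex). -/

import Mathlib

/-- A labeled graph over vertex type `V` and alphabet `A`, given by its
labeled-edge relation: `Edge p a q` means there is an edge labeled `a`
from `p` to `q`. -/
structure LabeledGraph (V A : Type) where
  Edge : V → A → V → Prop

namespace LabeledGraph

variable {V A : Type}

/-- `G.Walk p w q` : there is a (finite) path from `p` to `q` labeled `w`. -/
def Walk (G : LabeledGraph V A) : V → List A → V → Prop
  | p, [], q => p = q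
  | p, a :: w, q => ∃ r, G.Edge p a r ∧ Walk G r w q

/-- The follower set of a vertex: labels of finite paths starting at `q`. -/
def follower (G : LabeledGraph V A) (q : V) : Set (List A) :=
  { w | ∃ q', G.Walk q w q' }

/-- The transition action on sets of vertices: `S·w`. -/
def transSet (G : LabeledGraph V A) (S : Set V) (w : List A) : Set V :=
  { q' | ∃ q ∈ S, G.Walk q w q' }

/-- `G` is deterministic (right-resolving). -/
def Deterministic (G : LabeledGraph V A) : Prop :=
  ∀ p a q q', G.Edge p a q → G.Edge p a q' → q = q'

/-- `G` is essential: every vertex has an outgoing and an incoming edge. -/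
def Essential (G : LabeledGraph V A) : Prop :=
  ∀ q, (∃ a r, G.Edge q a r) ∧ (∃ a p, G.Edge p a q)

/-- The sofic shift presented by `G`: labels of bi-infinite paths. -/
def shift (G : LabeledGraph V A) : Set (ℤ → A) :=
  { x | ∃ v : ℤ → V, ∀ j : ℤ, G.Edge (v j) (x j) (v (j + 1)) }

/-- `w` is a synchronizing word for `G`: `Q_G · w` is a singleton. -/
def SyncWord (G : LabeledGraph V A) (w : List A) : Prop :=
  ∃ r, G.transSet Set.univ w = {r}

/-- A vertex `q` is synchronizing: some word synchronizes to `q`. -/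
def SyncVertex (G : LabeledGraph V A) (q : V) : Prop :=
  ∃ w, G.transSet Set.univ w = {q}

/-- `G` is synchronizing: every vertex is synchronizing. -/
def Synchronizing (G : LabeledGraph V A) : Prop :=
  ∀ q, G.SyncVertex q

/-- `G` is follower-separated. -/
def FollowerSeparated (G : LabeledGraph V A) : Prop :=
  ∀ p q, G.follower p = G.follower q → p = q

/-- `G` is irreducible (strongly connected). -/
def StronglyConnected (G : LabeledGraph V A) : Prop :=
  ∀ p q, ∃ w, G.Walk p w q

/-- `q` is reachable from `p`. -/
def Reachable (G : LabeledGraph V A) (p q : V) : Prop :=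
  ∃ w, G.Walk p w q

/-- `C` is an irreducible component: an equivalence class of mutual reachability. -/
def IsIrredComponent (G : LabeledGraph V A) (C : Set V) : Prop :=
  ∃ p, C = { q | G.Reachable p q ∧ G.Reachable q p }

/-- `C` is terminal: everything reachable from `C` lies in `C`. -/
def TerminalSet (G : LabeledGraph V A) (C : Set V) : Prop :=
  ∀ p ∈ C, ∀ q, G.Reachable p q → q ∈ C

/-- `C` is initial: everything that reaches `C` lies in `C`. -/
def InitialSet (G : LabeledGraph V A) (C : Set V) : Prop :=
  ∀ q ∈ C, ∀ p, G.Reachable p q → p ∈ C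

/-- Subgraph induced by a set `P` of vertices. -/
def induce (G : LabeledGraph V A) (P : Set V) : LabeledGraph P A where
  Edge := fun p a q => G.Edge p.1 a q.1

/-- The graph `Ĝ`: vertices are ordered pairs of distinct vertices of `G`,
with an edge labeled `a` from `(p₁,p₂)` to `(q₁,q₂)` iff `G` has edges labeled
`a` from `p₁` to `q₁` and from `p₂` to `q₂`. -/
def pairGraph (G : LabeledGraph V A) : LabeledGraph { pq : V × V // pq.1 ≠ pq.2 } A where
  Edge := fun x a y => G.Edge x.1.1 a y.1.1 ∧ G.Edge x.1.2 a y.1.2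

end LabeledGraph

/-- The word `w` appears in the bi-infinite sequence `x`. -/
def AppearsIn {A : Type} (w : List A) (x : ℤ → A) : Prop :=
  ∃ i : ℤ, ∀ n : Fin w.length, x (i + (n : ℕ)) = w.get n

/-- The language of a subset of the full shift: all finite words appearing
in some point of `X`. -/
def lang {A : Type} (X : Set (ℤ → A)) : Set (List A) :=
  { w | ∃ x ∈ X, AppearsIn w x }

/-- `X` is a shift space. -/
def IsShiftSpace {A : Type} (X : Set (ℤ → A)) : Prop :=
  ∃ F : Set (List A), X = { x | ∀ w ∈ F, ¬ AppearsIn w x }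

/-- `X` is a shift of finite type. -/
def IsSFT {A : Type} (X : Set (ℤ → A)) : Prop :=
  ∃ F : Set (List A), F.Finite ∧ X = { x | ∀ w ∈ F, ¬ AppearsIn w x }

/-- `w` is intrinsically synchronizing for `X`. -/
def IntrinsicallySync {A : Type} (X : Set (ℤ → A)) (w : List A) : Prop :=
  w ∈ lang X ∧ ∀ u v, u ++ w ∈ lang X → w ++ v ∈ lang X → u ++ (w ++ v) ∈ lang X

/-- `X` is an irreducible shift space. -/
def IrreducibleShift {A : Type} (X : Set (ℤ → A)) : Prop :=
  ∀ u ∈ lang X, ∀ v ∈ lang X, ∃ w, u ++ (w ++ v) ∈ lang X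

/-- The follower set of a word `u` in `X`. -/
def followerX {A : Type} (X : Set (ℤ → A)) (u : List A) : Set (List A) :=
  { w | u ++ w ∈ lang X }

/-- `X` is `M`-step: every word of `B(X)` of length at least `M` is
intrinsically synchronizing for `X`. -/
def MStep {A : Type} (X : Set (ℤ → A)) (M : ℕ) : Prop :=
  ∀ w ∈ lang X, M ≤ w.length → IntrinsicallySync X w


section Aux
variable {V A : Type} {G : LabeledGraph V A}

lemma walk_nil {p q : V} : G.Walk p [] q ↔ p = q := Iff.rfl

lemma walk_cons {p q : V} {a : A} {w : List A} :
    G.Walk p (a :: w) q ↔ ∃ r, G.Edge p a r ∧ G.Walk r w q := Iff.rfl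

lemma walk_append {u v : List A} : ∀ {p r : V},
    G.Walk p (u ++ v) r ↔ ∃ q, G.Walk p u q ∧ G.Walk q v r := by
  induction u with
  | nil => intro p r; simp [walk_nil]
  | cons a u ih =>
    intro p r
    constructor
    · rintro ⟨s, he, hw⟩
      obtain ⟨q, h1, h2⟩ := ih.1 hw
      exact ⟨q, ⟨s, he, h1⟩, h2⟩
    · rintro ⟨q, ⟨s, he, h1⟩, h2⟩
      exact ⟨s, he, ih.2 ⟨q, h1, h2⟩⟩

lemma walk_det (hdet : G.Deterministic) : ∀ {w : List A} {p q q' : V},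
    G.Walk p w q → G.Walk p w q' → q = q' := by
  intro w
  induction w with
  | nil => intro p q q' h h'; exact h.symm.trans h'
  | cons a w ih =>
    rintro p q q' ⟨r, he, hw⟩ ⟨r', he', hw'⟩
    cases hdet p a r r' he he'
    exact ih hw hw'

/-- Extract the vertex sequence along a walk. -/
lemma exists_fun_of_walk : ∀ {w : List A} {p q : V}, G.Walk p w q →
    ∃ f : ℕ → V, f 0 = p ∧ f w.length = q ∧
      ∀ k (hk : k < w.length), G.Edge (f k) (w.get ⟨k, hk⟩) (f (k + 1)) := by
  intro w
  induction w with
  | nil =>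
    rintro p q rfl
    exact ⟨fun _ => p, rfl, rfl, by intro k hk; simp at hk⟩
  | cons a w ih =>
    rintro p q ⟨r, he, hw⟩
    obtain ⟨f, hf0, hfl, hfe⟩ := ih hw
    refine ⟨fun n => Nat.rec p (fun k _ => f k) n, rfl, hfl, ?_⟩
    intro k hk
    match k with
    | 0 => simpa [hf0] using he
    | k + 1 => exact hfe k (by simpa using hk)

/-- Reconstruct a walk from a vertex sequence, between indices `i ≤ j`. -/
lemma walk_of_fun {w : List A} {f : ℕ → V}
    (hf : ∀ k (hk : k < w.length), G.Edge (f k) (w.get ⟨k, hk⟩) (f (k + 1))) :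
    ∀ d i, i + d ≤ w.length → G.Walk (f i) ((w.drop i).take d) (f (i + d)) := by
  intro d
  induction d with
  | zero => intro i _; simp [walk_nil]
  | succ d ih =>
    intro i hi
    have hiw : i < w.length := by omega
    have hdrop : w.drop i = w.get ⟨i, hiw⟩ :: w.drop (i + 1) := by
      rw [List.drop_eq_getElem_cons hiw]; rfl
    rw [hdrop]
    refine ⟨f (i + 1), hf i hiw, ?_⟩
    have := ih (i + 1) (by omega)
    convert this using 2
    omega
end Aux

section Aux2
variable {V A : Type} {G : LabeledGraph V A}

abbrev PairV (V : Type) := { pq : V × V // pq.1 ≠ pq.2 }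

lemma pair_walk_proj : ∀ {w : List A} {x y : PairV V},
    G.pairGraph.Walk x w y → G.Walk x.1.1 w y.1.1 ∧ G.Walk x.1.2 w y.1.2 := by
  intro w
  induction w with
  | nil => intro x y h; obtain rfl : x = y := h; exact ⟨rfl, rfl⟩
  | cons a w ih =>
    rintro x y ⟨r, ⟨he1, he2⟩, hw⟩
    obtain ⟨h1, h2⟩ := ih hw
    exact ⟨⟨r.1.1, he1, h1⟩, ⟨r.1.2, he2, h2⟩⟩

/-- Either the two walks end at the same vertex, or they give a pair walk. -/
lemma pair_walk_lift (hdet : G.Deterministic) : ∀ {w : List A} {p p' q q' : V}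
    (_ : G.Walk p w q) (_ : G.Walk p' w q') (hpp : p ≠ p'),
    q = q' ∨ ∃ h : q ≠ q', G.pairGraph.Walk ⟨(p, p'), hpp⟩ w ⟨(q, q'), h⟩ := by
  intro w
  induction w with
  | nil =>
    intro p p' q q' h h' hpp
    obtain rfl : p = q := h
    obtain rfl : p' = q' := h'
    exact Or.inr ⟨hpp, rfl⟩
  | cons a w ih =>
    rintro p p' q q' ⟨r, he, hw⟩ ⟨r', he', hw'⟩ hpp
    by_cases hrr : r = r'
    · subst hrr; exact Or.inl (walk_det hdet hw hw')
    · rcases ih hw hw' hrr with h | ⟨h, hpw⟩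
      · exact Or.inl h
      · exact Or.inr ⟨h, ⟨⟨(r, r'), hrr⟩, ⟨he, he'⟩, hpw⟩⟩

/-- If the pair graph has no nonempty cycle, there is no long pair walk. -/
lemma no_long_pair_walk [Fintype V]
    (hnc : ¬ ∃ (x : PairV V) (w : List A), w ≠ [] ∧ G.pairGraph.Walk x w x)
    {x y : PairV V} {w : List A} (hw : G.pairGraph.Walk x w y) :
    w.length < Nat.card (PairV V) := by
  have : Fintype (PairV V) := Fintype.ofFinite _
  by_contra hlen
  push_neg at hlen
  obtain ⟨f, hf0, hfl, hfe⟩ := exists_fun_of_walk hw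
  set N := Nat.card (PairV V) with hN
  have key : ∀ i j : Fin (N + 1), (i : ℕ) < (j : ℕ) → f i = f j → False := by
    intro i j hlt hfij
    apply hnc
    refine ⟨f i, (w.drop i).take (j - i), ?_, ?_⟩
    · have hjN : (j : ℕ) ≤ N := Nat.le_of_lt_succ j.isLt
      simp only [ne_eq, ← List.length_eq_zero_iff]
      rw [List.length_take, List.length_drop]
      omega
    · have hjN : (j : ℕ) ≤ N := Nat.le_of_lt_succ j.isLt
      have h2 := walk_of_fun hfe ((j : ℕ) - (i : ℕ)) i (by omega)
      rw [show (i : ℕ) + ((j : ℕ) - (i : ℕ)) = (j : ℕ) by omega] at h2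
      rw [← hfij] at h2
      exact h2
  obtain ⟨i, j, hij, hfij⟩ := Fintype.exists_ne_map_eq_of_card_lt
    (fun n : Fin (N + 1) => f n) (by simp [hN, Nat.card_eq_fintype_card])
  rcases lt_or_gt_of_ne (Fin.val_ne_of_ne hij) with hlt | hlt
  · exact key i j hlt hfij
  · exact key j i hlt hfij.symm

/-- Two walks with the same long label end at the same vertex. -/
lemma long_walk_unique_end [Fintype V] (hdet : G.Deterministic)
    (hnc : ¬ ∃ (x : PairV V) (w : List A), w ≠ [] ∧ G.pairGraph.Walk x w x)
    {w : List A} (hlen : Nat.card (PairV V) ≤ w.length)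
    {p p' q q' : V} (h : G.Walk p w q) (h' : G.Walk p' w q') : q = q' := by
  by_cases hpp : p = p'
  · subst hpp; exact walk_det hdet h h'
  · rcases pair_walk_lift hdet h h' hpp with heq | ⟨hne, hpw⟩
    · exact heq
    · exact absurd (no_long_pair_walk hnc hpw) (by omega)
end Aux2

section Aux3
variable {V A : Type} {G : LabeledGraph V A}

lemma walk_of_appears {x : ℤ → A} {v : ℤ → V}
    (hv : ∀ j : ℤ, G.Edge (v j) (x j) (v (j + 1))) :
    ∀ (w : List A) (i : ℤ), (∀ n : Fin w.length, x (i + (n : ℕ)) = w.get n) →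
      G.Walk (v i) w (v (i + w.length)) := by
  intro w
  induction w with
  | nil => intro i _; simpa [walk_nil] using rfl
  | cons a w ih =>
    intro i hx
    refine ⟨v (i + 1), ?_, ?_⟩
    · have h0 : x i = a := by simpa using hx ⟨0, by simp⟩
      rw [← h0]; exact hv i
    · have := ih (i + 1) (fun n => by
        have := hx ⟨n + 1, by simpa using Nat.succ_lt_succ n.isLt⟩
        simpa [add_assoc, add_comm, add_left_comm] using this)
      have harith : i + 1 + (w.length : ℤ) = i + ((a :: w).length : ℕ) := by
        push_cast [List.length_cons]; ring
      rwa [harith] at this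

lemma exists_point_of_walk (hess : G.Essential) {p q : V} {u : List A}
    (hw : G.Walk p u q) : ∃ x ∈ G.shift, AppearsIn u x := by
  classical
  have h1 : ∀ v : V, ∃ a r, G.Edge v a r := fun v => (hess v).1
  choose fa fv hout using h1
  have h2 : ∀ v : V, ∃ a r, G.Edge r a v := fun v => (hess v).2
  choose ga gv hin using h2
  obtain ⟨f, hf0, hfl, hfe⟩ := exists_fun_of_walk hw
  set L : ℕ := u.length with hL
  set Bv : ℕ → V := fun n => gv^[n] p with hBv
  set Fv : ℕ → V := fun n => fv^[n] q with hFv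
  have hBv0 : Bv 0 = p := rfl
  have hFv0 : Fv 0 = q := rfl
  have hBsucc : ∀ n, Bv (n + 1) = gv (Bv n) := fun n => Function.iterate_succ_apply' gv n p
  have hFsucc : ∀ n, Fv (n + 1) = fv (Fv n) := fun n => Function.iterate_succ_apply' fv n q
  set vv : ℤ → V := fun j =>
    if j ≤ 0 then Bv (-j).toNat else if j ≤ (L : ℤ) then f j.toNat else Fv (j - L).toNat
    with hvv
  set xx : ℤ → A := fun j =>
    if h : 0 ≤ j ∧ j < (L : ℤ) then u.get ⟨j.toNat, by omega⟩
    else if j < 0 then ga (Bv (-(j + 1)).toNat) else fa (Fv (j - L).toNat)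
    with hxx
  have hvhi : ∀ j : ℤ, (L : ℤ) ≤ j → vv j = Fv (j - L).toNat := by
    intro j hj
    by_cases hj0 : j ≤ 0
    · have hL0 : L = 0 := by omega
      have hj00 : j = 0 := by omega
      have hpq : p = q := by
        have : u = [] := List.length_eq_zero_iff.mp hL0
        subst this; exact hw
      have h1 : vv j = p := by simp [hvv, hj00, hBv0]
      have h2 : (j - (L : ℤ)).toNat = 0 := by omega
      rw [h1, h2, hFv0]; exact hpq
    · by_cases hjL : j ≤ (L : ℤ)
      · have h1 : vv j = f j.toNat := by simp [hvv, hj0, hjL]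
        have hjt : j.toNat = L := by omega
        have hjz : (j - (L : ℤ)).toNat = 0 := by omega
        rw [h1, hjt, hfl, hjz, hFv0]
      · simp [hvv, hj0, hjL]
  have hedge : ∀ j : ℤ, G.Edge (vv j) (xx j) (vv (j + 1)) := by
    intro j
    rcases lt_trichotomy j 0 with hj | hj | hj
    · -- j < 0
      have hv1 : vv j = Bv (-j).toNat := by simp [hvv, hj.le]
      have hv2 : vv (j + 1) = Bv (-(j + 1)).toNat := by
        have : j + 1 ≤ 0 := by omega
        simp [hvv, this]
      have hx1 : xx j = ga (Bv (-(j + 1)).toNat) := by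
        have h1 : ¬ (0 ≤ j ∧ j < (L : ℤ)) := by omega
        simp [hxx, h1, hj]
      rw [hv1, hv2, hx1]
      have hk : (-j).toNat = (-(j + 1)).toNat + 1 := by omega
      rw [hk, hBsucc]
      exact hin _
    · -- j = 0
      subst hj
      rw [show (0 : ℤ) + 1 = 1 by norm_num]
      by_cases hL0 : 0 < L
      · have hv1 : vv 0 = f 0 := by simp [hvv, hBv0, hf0]
        have hv2 : vv 1 = f 1 := by
          have h1 : ¬ ((1 : ℤ) ≤ 0) := by omega
          have h2 : (1 : ℤ) ≤ (L : ℤ) := by omega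
          simp [hvv, h1, h2]
        have hx1 : xx 0 = u.get ⟨0, hL0⟩ := by
          have h1 : (0 : ℤ) ≤ 0 ∧ (0 : ℤ) < (L : ℤ) := by omega
          simp [hxx, h1, hL0]
        rw [hv1, hv2, hx1]
        exact hfe 0 hL0
      · -- L = 0
        have hL0' : L = 0 := by omega
        have hv1 : vv 0 = Fv 0 := by rw [hvhi 0 (by omega)]; norm_num
        have hv2 : vv 1 = Fv 1 := by rw [hvhi 1 (by omega)]; congr 1; omega
        have hx1 : xx 0 = fa (Fv 0) := by
          have h1 : ¬ ((0 : ℤ) ≤ 0 ∧ (0 : ℤ) < (L : ℤ)) := by omega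
          have h2 : ¬ ((0 : ℤ) < 0) := by omega
          simp only [hxx, dif_neg h1, if_neg h2]
          congr 2
          omega
        rw [hv1, hv2, hx1, hFsucc]
        exact hout _
    · -- j > 0
      by_cases hjL : j < (L : ℤ)
      · have hv1 : vv j = f j.toNat := by
          have h1 : ¬ (j ≤ 0) := by omega
          have h2 : j ≤ (L : ℤ) := by omega
          simp [hvv, h1, h2]
        have hv2 : vv (j + 1) = f (j.toNat + 1) := by
          have h1 : ¬ (j + 1 ≤ 0) := by omega
          have h2 : j + 1 ≤ (L : ℤ) := by omega
          simp only [hvv, if_neg h1, if_pos h2]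
          congr 1
          omega
        have hjt : j.toNat < L := by omega
        have hx1 : xx j = u.get ⟨j.toNat, hjt⟩ := by
          have h1 : 0 ≤ j ∧ j < (L : ℤ) := by omega
          simp [hxx, h1]
        rw [hv1, hv2, hx1]
        exact hfe j.toNat hjt
      · -- j ≥ L
        have hv1 : vv j = Fv (j - L).toNat := hvhi j (by omega)
        have hv2 : vv (j + 1) = Fv ((j - L).toNat + 1) := by
          rw [hvhi (j + 1) (by omega)]
          congr 1
          omega
        have hx1 : xx j = fa (Fv (j - L).toNat) := by
          have h1 : ¬ (0 ≤ j ∧ j < (L : ℤ)) := by omega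
          have h2 : ¬ (j < 0) := by omega
          simp [hxx, h1, h2]
        rw [hv1, hv2, hx1, hFsucc]
        exact hout _
  refine ⟨xx, ⟨vv, hedge⟩, 0, ?_⟩
  intro n
  have h1 : 0 ≤ (0 : ℤ) + (n : ℕ) ∧ (0 : ℤ) + (n : ℕ) < (L : ℤ) := by
    constructor <;> [positivity; exact_mod_cast (show 0 + (n : ℕ) < L by have := n.isLt; omega)]
  simp only [hxx, dif_pos h1]
  congr
  omega

lemma walk_pow {p : V} {w : List A} (h : G.Walk p w p) :
    ∀ n : ℕ, G.Walk p ((List.replicate n w).flatten) p := by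
  intro n
  induction n with
  | zero => exact rfl
  | succ n ih =>
    rw [List.replicate_succ, List.flatten_cons]
    exact walk_append.2 ⟨p, h, ih⟩

lemma length_pow {w : List A} (n : ℕ) :
    ((List.replicate n w).flatten).length = n * w.length := by
  simp [List.length_flatten, mul_comm]
end Aux3

section Aux4
variable {V A : Type}

lemma backward_dir [Fintype V] [Fintype A] (G : LabeledGraph V A)
    (hdet : G.Deterministic)
    (hnc : ¬ ∃ (x : PairV V) (w : List A), w ≠ [] ∧ G.pairGraph.Walk x w x) :
    IsSFT G.shift := by
  classical
  set N : ℕ := Nat.card (PairV V) + 1 with hN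
  refine ⟨{w : List A | w.length = N + 1 ∧ w ∉ lang G.shift}, ?_, ?_⟩
  · exact (List.finite_length_eq A (N + 1)).subset (fun w hw => hw.1)
  · ext x
    simp only [Set.mem_setOf_eq]
    constructor
    · intro hx w hw happ
      exact hw.2 ⟨x, hx, happ⟩
    · intro hx
      -- every window of length N+1 is readable
      set W : ℤ → List A := fun i => List.ofFn fun k : Fin (N + 1) => x (i - N + k) with hW
      set ω : ℤ → List A := fun i => List.ofFn fun k : Fin N => x (i - N + k) with hω
      have hWlen : ∀ i, (W i).length = N + 1 := fun i => by
        simp only [hW, List.length_ofFn]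
      have hωlen : ∀ i, (ω i).length = N := fun i => by
        simp only [hω, List.length_ofFn]
      have happW : ∀ i : ℤ, AppearsIn (W i) x := by
        intro i
        refine ⟨i - N, fun n => ?_⟩
        rw [List.get_eq_getElem]
        simp only [hW, List.getElem_ofFn]
      have hread : ∀ i : ℤ, ∃ p q, G.Walk p (W i) q := by
        intro i
        have hmem : W i ∈ lang G.shift := by
          by_contra h
          exact hx (W i) ⟨hWlen i, h⟩ (happW i)
        obtain ⟨x', ⟨v', hv'⟩, i', happ'⟩ := hmem
        exact ⟨v' i', v' (i' + (W i).length), walk_of_appears hv' (W i) i' happ'⟩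
      -- the two decompositions of W i
      have e1 : ∀ i : ℤ, W i = ω i ++ [x i] := by
        intro i
        simp only [hW, hω]
        rw [List.ofFn_succ']
        simp only [List.concat_eq_append]
        congr 1
        simp only [Fin.val_last]
        rw [show i - (N : ℤ) + (N : ℤ) = i by omega]
      have e2 : ∀ i : ℤ, W i = x (i - N) :: ω (i + 1) := by
        intro i
        simp only [hW, hω]
        rw [List.ofFn_succ]
        congr 1
        · simp
        · congr 1
          funext k
          congr 1
          simp only [Fin.val_succ]
          push_cast
          ring
      have hωwalk : ∀ i : ℤ, ∃ r p, G.Walk p (ω i) r := by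
        intro i
        obtain ⟨p, q, hpq⟩ := hread i
        rw [e1 i] at hpq
        obtain ⟨r, h1, _⟩ := walk_append.1 hpq
        exact ⟨r, p, h1⟩
      set vf : ℤ → V := fun i => (hωwalk i).choose with hvf
      have hvfw : ∀ i : ℤ, ∃ p, G.Walk p (ω i) (vf i) := fun i => (hωwalk i).choose_spec
      have huniq : ∀ (i : ℤ) {p r : V}, G.Walk p (ω i) r → r = vf i := by
        intro i p r hpr
        obtain ⟨p', hp'⟩ := hvfw i
        exact long_walk_unique_end hdet hnc (by rw [hωlen i]; omega) hpr hp'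
      refine ⟨vf, fun j => ?_⟩
      obtain ⟨p, q, hpq⟩ := hread j
      have hpq1 := hpq
      rw [e1 j] at hpq1
      obtain ⟨r, h1, h2⟩ := walk_append.1 hpq1
      obtain ⟨s, hedge, hs⟩ := h2
      have hsq : s = q := hs
      subst hsq
      have hr : r = vf j := huniq j h1
      rw [e2 j] at hpq
      obtain ⟨s', _, hs'⟩ := hpq
      have hq : s = vf (j + 1) := huniq (j + 1) hs'
      rw [← hr, ← hq]
      exact hedge
end Aux4

section Aux5
variable {V A : Type} {G : LabeledGraph V A}

lemma appears_get {w : List A} {x : ℤ → A} {i : ℤ}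
    (h : ∀ n : Fin w.length, x (i + (n : ℕ)) = w.get n) (k : ℕ) (hk : k < w.length) :
    x (i + (k : ℕ)) = w[k] := by
  have := h ⟨k, hk⟩
  simpa [List.get_eq_getElem] using this

lemma forward_aux [Fintype V] [Fintype A]
    (hdet : G.Deterministic) (hess : G.Essential)
    {p q : V} {w u v₀ : List A} (hpq : p ≠ q)
    (hwp : G.Walk p w p) (hwq : G.Walk q w q) (hwne : w ≠ [])
    (hu : G.transSet Set.univ u = {p})
    (hv₀q : v₀ ∈ G.follower q) (hv₀p : v₀ ∉ G.follower p)
    (hSFT : IsSFT G.shift) : False := by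
  classical
  obtain ⟨F, hFfin, hX⟩ := hSFT
  obtain ⟨M, hM⟩ : ∃ M : ℕ, ∀ f ∈ F, f.length ≤ M := by
    obtain ⟨M, hM⟩ := (hFfin.image List.length).bddAbove
    exact ⟨M, fun f hf => hM (Set.mem_image_of_mem List.length hf)⟩
  set Wb : List A := (List.replicate M w).flatten with hWb
  have hWbp : G.Walk p Wb p := walk_pow hwp M
  have hWbq : G.Walk q Wb q := walk_pow hwq M
  have hwlen : 1 ≤ w.length := by
    rcases w with _ | ⟨c, w'⟩
    · exact absurd rfl hwne
    · simp
  have hWblen : M ≤ Wb.length := by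
    rw [hWb, length_pow]
    exact Nat.le_mul_of_pos_right M (by omega)
  have hp_mem : p ∈ G.transSet Set.univ u := by rw [hu]; rfl
  obtain ⟨q₀, -, hq₀⟩ := hp_mem
  obtain ⟨q₁, hq₁⟩ := hv₀q
  have hxw : G.Walk q₀ (u ++ Wb) p := walk_append.2 ⟨p, hq₀, hWbp⟩
  have hyw : G.Walk q (Wb ++ v₀) q₁ := walk_append.2 ⟨q, hWbq, hq₁⟩
  obtain ⟨x, hxs, i, hxapp⟩ := exists_point_of_walk hess hxw
  obtain ⟨y, hys, j, hyapp⟩ := exists_point_of_walk hess hyw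
  have hxX : ∀ f ∈ F, ¬ AppearsIn f x := by rw [hX] at hxs; exact hxs
  have hyX : ∀ f ∈ F, ¬ AppearsIn f y := by rw [hX] at hys; exact hys
  set a : ℕ := u.length with ha
  set b : ℕ := Wb.length with hb
  have hxlen : (u ++ Wb).length = a + b := by rw [List.length_append]
  have hylen : (Wb ++ v₀).length = b + v₀.length := by rw [List.length_append]
  set z : ℤ → A := fun m =>
    if m < i + ((a + b : ℕ) : ℤ) then x m else y (m - (i + (a : ℤ)) + j) with hz
  -- agreement with y on the right part
  have hagree : ∀ m : ℤ, i + (a : ℤ) ≤ m → z m = y (m - (i + (a : ℤ)) + j) := by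
    intro m hm
    by_cases hc : m < i + ((a + b : ℕ) : ℤ)
    · set k : ℕ := (m - i - (a : ℤ)).toNat with hk
      have hkb : k < b := by omega
      have hmx : m = i + ((a + k : ℕ) : ℤ) := by push_cast; omega
      have h1 : z m = x m := by rw [hz]; simp only [if_pos hc]
      have h4 : y (j + (k : ℕ)) = (Wb ++ v₀)[k]'(by omega) :=
        appears_get hyapp k (by omega)
      have h5 : (Wb ++ v₀)[k]'(by omega) = Wb[k]'hkb := by
        rw [List.getElem_append_left]
      have h6 : m - (i + (a : ℤ)) + j = j + (k : ℕ) := by push_cast; omega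
      rw [h1, h6, h4, h5, hmx]
      rw [appears_get hxapp (a + k) (by omega)]
      rw [List.getElem_append_right (by omega)]
      congr 1
      omega
    · rw [hz]; simp only [if_neg hc]
  -- z avoids all forbidden words
  have hzX : z ∈ G.shift := by
    rw [hX]
    intro f hf happf
    have hfne : f ≠ [] := by
      rintro rfl
      exact hxX [] hf ⟨0, fun n => n.elim0⟩
    have hflen : 1 ≤ f.length := List.length_pos_iff.mpr hfne
    have hfM : f.length ≤ M := hM f hf
    obtain ⟨t, ht⟩ := happf
    by_cases hcase : t + (f.length : ℤ) ≤ i + ((a + b : ℕ) : ℤ)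
    · apply hxX f hf
      refine ⟨t, fun n => ?_⟩
      have h1 : z (t + ((n : ℕ) : ℤ)) = x (t + ((n : ℕ) : ℤ)) := by
        rw [hz]
        simp only [if_pos (show t + ((n : ℕ) : ℤ) < i + ((a + b : ℕ) : ℤ) by
          have := n.isLt; push_cast at hcase ⊢; omega)]
      rw [← h1]; exact ht n
    · apply hyX f hf
      refine ⟨t - (i + (a : ℤ)) + j, fun n => ?_⟩
      have htlow : i + (a : ℤ) ≤ t := by push_cast at hcase ⊢; omega
      have h1 : z (t + ((n : ℕ) : ℤ)) = y (t + ((n : ℕ) : ℤ) - (i + (a : ℤ)) + j) :=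
        hagree _ (by have := n.isLt; push_cast; omega)
      have harith : t - (i + (a : ℤ)) + j + ((n : ℕ) : ℤ) = t + ((n : ℕ) : ℤ) - (i + (a : ℤ)) + j := by
        ring
      rw [harith, ← h1]; exact ht n
  -- the long word appears in z
  have hTlen : (u ++ (Wb ++ v₀)).length = a + b + v₀.length := by
    simp [List.length_append, add_assoc]
    omega
  have happT : ∀ n : Fin (u ++ (Wb ++ v₀)).length,
      z (i + ((n : ℕ) : ℤ)) = (u ++ (Wb ++ v₀)).get n := by
    intro n
    have hn : (n : ℕ) < a + b + v₀.length := by rw [← hTlen]; exact n.isLt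
    rw [List.get_eq_getElem]
    by_cases hcase : (n : ℕ) < a + b
    · have h1 : z (i + ((n : ℕ) : ℤ)) = x (i + ((n : ℕ) : ℤ)) := by
        rw [hz]
        simp only [if_pos (show i + ((n : ℕ) : ℤ) < i + ((a + b : ℕ) : ℤ) by push_cast; omega)]
      have h2 : x (i + ((n : ℕ) : ℤ)) = (u ++ Wb)[(n : ℕ)]'(by omega) :=
        appears_get hxapp (n : ℕ) (by omega)
      have hassoc : u ++ (Wb ++ v₀) = (u ++ Wb) ++ v₀ := (List.append_assoc u Wb v₀).symm
      have h3 : (u ++ (Wb ++ v₀))[(n : ℕ)]'(n.isLt) = (u ++ Wb)[(n : ℕ)]'(by omega) := by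
        rw [List.getElem_of_eq hassoc, List.getElem_append_left]
      rw [h1, h2, h3]
    · have hge : i + (a : ℤ) ≤ i + ((n : ℕ) : ℤ) := by push_cast; omega
      set k : ℕ := (n : ℕ) - a with hk2
      have h1 : z (i + ((n : ℕ) : ℤ)) = y (i + ((n : ℕ) : ℤ) - (i + (a : ℤ)) + j) :=
        hagree _ hge
      have h6 : i + ((n : ℕ) : ℤ) - (i + (a : ℤ)) + j = j + (k : ℕ) := by push_cast; omega
      have h4 : y (j + (k : ℕ)) = (Wb ++ v₀)[k]'(by omega) :=
        appears_get hyapp k (by omega)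
      have h3 : (u ++ (Wb ++ v₀))[(n : ℕ)]'(n.isLt) = (Wb ++ v₀)[k]'(by omega) := by
        rw [List.getElem_append_right (by omega)]
      rw [h1, h6, h4, h3]
  obtain ⟨vz, hvz⟩ := hzX
  have hTwalk := walk_of_appears hvz (u ++ (Wb ++ v₀)) i happT
  obtain ⟨r1, hr1u, hr1rest⟩ := walk_append.1 hTwalk
  have hr1p : r1 = p := by
    have hmem : r1 ∈ G.transSet Set.univ u := ⟨vz i, Set.mem_univ _, hr1u⟩
    rw [hu] at hmem
    exact hmem
  rw [hr1p] at hr1rest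
  obtain ⟨r2, hr2W, hr2v⟩ := walk_append.1 hr1rest
  have hr2p : r2 = p := walk_det hdet hr2W hWbp
  rw [hr2p] at hr2v
  exact hv₀p ⟨_, hr2v⟩
end Aux5

/-- Let `G` be a follower-separated, synchronizing, deterministic presentation
over a finite alphabet. Then `⟨G⟩` is a shift of finite type if and only if
the graph `Ĝ` is acyclic (has no nonempty path starting and ending at the
same vertex). -/
theorem stmt7 {V A : Type} [Fintype V] [Fintype A] (G : LabeledGraph V A)
    (hdet : G.Deterministic) (hess : G.Essential)
    (hfs : G.FollowerSeparated) (hsync : G.Synchronizing) :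
    IsSFT G.shift ↔ ¬ ∃ (x : { pq : V × V // pq.1 ≠ pq.2 }) (w : List A),
      w ≠ [] ∧ G.pairGraph.Walk x w x := by
  constructor
  · intro hSFT
    rintro ⟨⟨⟨p, q⟩, hpq⟩, w, hwne, hpw⟩
    obtain ⟨hwp, hwq⟩ := pair_walk_proj hpw
    have hpq' : p ≠ q := hpq
    have hneq : G.follower p ≠ G.follower q := fun h => hpq' (hfs p q h)
    have hex : ∃ v₀, (v₀ ∈ G.follower q ∧ v₀ ∉ G.follower p) ∨
        (v₀ ∈ G.follower p ∧ v₀ ∉ G.follower q) := by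
      by_contra h
      push_neg at h
      apply hneq
      ext v₀
      have := h v₀
      tauto
    obtain ⟨v₀, hcase⟩ := hex
    rcases hcase with ⟨h1, h2⟩ | ⟨h1, h2⟩
    · obtain ⟨u, hu⟩ := hsync p
      exact forward_aux hdet hess hpq' hwp hwq hwne hu h1 h2 hSFT
    · obtain ⟨u, hu⟩ := hsync q
      exact forward_aux hdet hess (Ne.symm hpq') hwq hwp hwne hu h1 h2 hSFT
  · intro hnc
    exact backward_dir G hdet hnc
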